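/- Let (X_x)_{x∈ℝ} be a family of nonnegative, identically distributed, non-trivial (not a.s. zero) random variables on a probability space, and let f : ℝ → [0,∞) be measurable. If P(∫_ℝ f(x) X_x dx < ∞) = 1, then ∫_ℝ f(x) dx < ∞. -/

import Mathlib

open MeasureTheory ProbabilityTheory ENNReal

/-- Jeulin's lemma (simple version): if `(X x)` is a jointly measurable family of
nonnegative, identically distributed, non-trivial random variables and
`∫ f x * X x dx < ∞` almost surely, then `∫ f < ∞`. -/
theorem jeulin_lemma {Ω : Type*} [MeasurableSpace Ω] (P : Measure Ω) [IsProbabilityMeasure P]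
    (X : ℝ → Ω → ℝ) (hXmeas : Measurable (Function.uncurry X))
    (hXnonneg : ∀ x ω, 0 ≤ X x ω)
    (hXid : ∀ x : ℝ, P.map (X x) = P.map (X 0))
    (hXnontriv : ¬ (∀ᵐ ω ∂P, X 0 ω = 0))
    (f : ℝ → ℝ) (hf : Measurable f) (hf0 : ∀ x, 0 ≤ f x)
    (h : P {ω | ∫⁻ x : ℝ, ENNReal.ofReal (f x * X x ω) < ∞} = 1) :
    ∫⁻ x : ℝ, ENNReal.ofReal (f x) < ∞ := by
  by_contra H
  have Hinf : ∫⁻ x : ℝ, ENNReal.ofReal (f x) = ∞ := by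
    simpa [lt_top_iff_ne_top] using H
  -- measurability of each X x
  have hXm : ∀ x : ℝ, Measurable (X x) := fun x =>
    hXmeas.comp (measurable_prodMk_left)
  -- find c > 0 with δ := P {c ≤ X 0} > 0
  obtain ⟨c, hc, hδ⟩ : ∃ c : ℝ, 0 < c ∧ P {ω | c ≤ X 0 ω} ≠ 0 := by
    by_contra hcon
    push_neg at hcon
    apply hXnontriv
    have hsub : {ω | X 0 ω ≠ 0} ⊆ ⋃ n : ℕ, {ω | ((n : ℝ) + 1)⁻¹ ≤ X 0 ω} := by
      intro ω hω
      have hpos : 0 < X 0 ω := lt_of_le_of_ne (hXnonneg 0 ω) (Ne.symm hω)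
      obtain ⟨n, hn⟩ := exists_nat_one_div_lt hpos
      exact Set.mem_iUnion.2 ⟨n, by rw [one_div] at hn; exact hn.le⟩
    have : P {ω | X 0 ω ≠ 0} = 0 := by
      refine measure_mono_null hsub ?_
      refine measure_iUnion_null fun n => hcon _ ?_
      positivity
    simpa [ae_iff] using this
  set δ : ℝ≥0∞ := P {ω | c ≤ X 0 ω} with hδdef
  have hδ1 : δ ≤ 1 := prob_le_one
  have hδtop : δ ≠ ∞ := (lt_of_le_of_lt hδ1 one_lt_top).ne
  -- identical distribution: P {c ≤ X x} = δ for all x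
  have hδx : ∀ x : ℝ, P {ω | c ≤ X x ω} = δ := by
    intro x
    have h1 : P.map (X x) (Set.Ici c) = P.map (X 0) (Set.Ici c) := by rw [hXid x]
    rwa [Measure.map_apply (hXm x) measurableSet_Ici,
      Measure.map_apply (hXm 0) measurableSet_Ici] at h1
  -- truncations of f
  set g : ℕ → ℝ → ℝ≥0∞ := fun k x =>
    (Set.Icc (-(k : ℝ)) k).indicator (fun x => min (ENNReal.ofReal (f x)) k) x with hgdef
  have hgmeas : ∀ k, Measurable (g k) :=
    fun k => ((measurable_ofReal.comp hf).min measurable_const).indicator measurableSet_Icc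
  have hgle : ∀ k x, g k x ≤ ENNReal.ofReal (f x) := by
    intro k x
    refine le_trans (Set.indicator_le_self _ _ x) (min_le_left _ _)
  have hgtop : ∀ k, ∫⁻ x, g k x ≤ (k : ℝ≥0∞) * volume (Set.Icc (-(k:ℝ)) k) := by
    intro k
    rw [hgdef]
    simp only []
    rw [lintegral_indicator measurableSet_Icc]
    calc ∫⁻ x in Set.Icc (-(k:ℝ)) k, min (ENNReal.ofReal (f x)) k
        ≤ ∫⁻ _ in Set.Icc (-(k:ℝ)) k, (k : ℝ≥0∞) :=
          lintegral_mono fun x => min_le_right _ _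
      _ = (k : ℝ≥0∞) * volume (Set.Icc (-(k:ℝ)) k) := setLIntegral_const _ _
  have hMfin : ∀ k, ∫⁻ x, g k x ≠ ∞ := by
    intro k
    refine (lt_of_le_of_lt (hgtop k) ?_).ne
    exact ENNReal.mul_lt_top (by simp) (by simp [Real.volume_Icc])
  -- sup of integrals is ∞
  have hgmono : Monotone g := by
    intro j k hjk x
    simp only [hgdef, Set.indicator_apply]
    by_cases hx : x ∈ Set.Icc (-(j:ℝ)) j
    · have hjk' : (j : ℝ) ≤ k := Nat.cast_le.2 hjk
      have hx' : x ∈ Set.Icc (-(k:ℝ)) k :=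
        ⟨le_trans (neg_le_neg hjk') hx.1, le_trans hx.2 hjk'⟩
      simp only [hx, hx', if_true]
      exact min_le_min le_rfl (by exact_mod_cast hjk)
    · simp [hx]
  have hMsup : (⨆ k, ∫⁻ x, g k x) = ∞ := by
    have : (⨆ k, ∫⁻ x, g k x) = ∫⁻ x, ⨆ k, g k x := by
      rw [lintegral_iSup hgmeas (fun i j hij => fun x => hgmono hij x)]
    rw [this]
    have hsup : ∀ x, (⨆ k, g k x) = ENNReal.ofReal (f x) := by
      intro x
      apply le_antisymm
      · exact iSup_le fun k => hgle k x
      · obtain ⟨k, hk1, hk2⟩ : ∃ k : ℕ, |x| ≤ k ∧ ENNReal.ofReal (f x) ≤ k := by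
          obtain ⟨k1, hk1⟩ := exists_nat_ge |x|
          obtain ⟨k2, hk2⟩ := exists_nat_ge (f x)
          refine ⟨max k1 k2, le_trans hk1 (by exact_mod_cast le_max_left _ _), ?_⟩
          calc ENNReal.ofReal (f x) ≤ ENNReal.ofReal k2 := ofReal_le_ofReal hk2
            _ ≤ ((max k1 k2 : ℕ) : ℝ≥0∞) := by
                rw [ENNReal.ofReal_natCast]
                exact_mod_cast le_max_right _ _
        refine le_trans ?_ (le_iSup _ k)
        have hx : x ∈ Set.Icc (-(k:ℝ)) k := abs_le.1 hk1
        simp [hgdef, hx, hk2]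
    simp_rw [hsup]
    exact Hinf
  -- the random total integral
  set G : Ω → ℝ≥0∞ := fun ω => ∫⁻ x : ℝ, ENNReal.ofReal (f x * X x ω) with hGdef
  have hGmeas : Measurable G := by
    apply Measurable.lintegral_prod_left
    exact measurable_ofReal.comp ((hf.comp measurable_fst).mul hXmeas)
  -- key estimate: for every k, P {ω | ofReal c * (δ/2 * ∫⁻ g k) ≤ G ω} ≥ δ/2
  have key : ∀ k : ℕ, δ / 2 ≤ P {ω | ENNReal.ofReal c * (δ / 2 * ∫⁻ x, g k x) ≤ G ω} := by
    intro k
    set M : ℝ≥0∞ := ∫⁻ x, g k x with hMdef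
    have hMne : M ≠ ∞ := hMfin k
    rcases eq_or_ne M 0 with hM0 | hM0
    · have : {ω | ENNReal.ofReal c * (δ / 2 * M) ≤ G ω} = Set.univ := by
        ext ω; simp [hM0]
      rw [this, measure_univ]
      exact le_trans ENNReal.half_le_self hδ1
    -- the indicator process
    set S : Set (ℝ × Ω) := Function.uncurry X ⁻¹' Set.Ici c with hSdef
    have hS : MeasurableSet S := hXmeas measurableSet_Ici
    set F : ℝ × Ω → ℝ≥0∞ := fun p => g k p.1 * S.indicator 1 p with hFdef
    have hF : Measurable F :=
      ((hgmeas k).comp measurable_fst).mul (measurable_one.indicator hS)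
    set Z : Ω → ℝ≥0∞ := fun ω => ∫⁻ x, F (x, ω) with hZdef
    have hZmeas : Measurable Z := Measurable.lintegral_prod_left hF
    -- pointwise bound Z ≤ M
    have hZle : ∀ ω, Z ω ≤ M := by
      intro ω
      refine lintegral_mono fun x => ?_
      calc F (x, ω) = g k x * S.indicator 1 (x, ω) := rfl
        _ ≤ g k x * 1 := mul_le_mul_right
            (by by_cases hp : (x, ω) ∈ S <;> simp [Set.indicator_apply, hp]) _
        _ = g k x := mul_one _
    -- expectation of Z
    have hEZ : ∫⁻ ω, Z ω ∂P = δ * M := by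
      have hswap : ∫⁻ ω, (∫⁻ x, F (x, ω)) ∂P = ∫⁻ x, (∫⁻ ω, F (x, ω) ∂P) :=
        lintegral_lintegral_swap (μ := P) (ν := volume) (f := fun ω x => F (x, ω))
          ((hF.comp measurable_swap).aemeasurable)
      have hinner : ∀ x : ℝ, ∫⁻ ω, F (x, ω) ∂P = g k x * δ := by
        intro x
        have hind : ∀ ω, S.indicator (1 : ℝ × Ω → ℝ≥0∞) (x, ω)
            = Set.indicator {ω' | c ≤ X x ω'} (1 : Ω → ℝ≥0∞) ω := by
          intro ω
          by_cases hcx : c ≤ X x ω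
          · rw [Set.indicator_of_mem (show (x, ω) ∈ S from hcx),
              Set.indicator_of_mem (show ω ∈ {ω' | c ≤ X x ω'} from hcx)]
            rfl
          · rw [Set.indicator_of_notMem (show (x, ω) ∉ S from hcx),
              Set.indicator_of_notMem (show ω ∉ {ω' | c ≤ X x ω'} from hcx)]
        have hmx : MeasurableSet {ω' | c ≤ X x ω'} := (hXm x) measurableSet_Ici
        calc ∫⁻ ω, F (x, ω) ∂P
            = ∫⁻ ω, g k x * Set.indicator {ω' | c ≤ X x ω'} (1 : Ω → ℝ≥0∞) ω ∂P := by
              simp_rw [hFdef, hind]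
          _ = g k x * ∫⁻ ω, Set.indicator {ω' | c ≤ X x ω'} (1 : Ω → ℝ≥0∞) ω ∂P :=
              lintegral_const_mul _ (measurable_one.indicator hmx)
          _ = g k x * δ := by rw [lintegral_indicator_one hmx, hδx x]
      calc ∫⁻ ω, Z ω ∂P = ∫⁻ x, ∫⁻ ω, F (x, ω) ∂P := hswap
        _ = ∫⁻ x, g k x * δ := by simp_rw [hinner]
        _ = δ * M := by rw [lintegral_mul_const _ (hgmeas k), hMdef, mul_comm]
    -- Markov-type estimate
    set A : Set Ω := {ω | δ / 2 * M ≤ Z ω} with hAdef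
    have hA : MeasurableSet A := hZmeas measurableSet_Ici
    have hPA : δ / 2 ≤ P A := by
      have hA1 : (∫⁻ ω in A, Z ω ∂P) ≤ M * P A := by
        calc (∫⁻ ω in A, Z ω ∂P) ≤ ∫⁻ _ in A, M ∂P := lintegral_mono fun ω => hZle ω
          _ = M * P A := setLIntegral_const _ _
      have hA2 : (∫⁻ ω in Aᶜ, Z ω ∂P) ≤ δ / 2 * M := by
        have hle : (∫⁻ ω in Aᶜ, Z ω ∂P) ≤ ∫⁻ _ in Aᶜ, δ / 2 * M ∂P := by
          refine setLIntegral_mono_ae aemeasurable_const (ae_of_all _ ?_)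
          intro ω hω
          exact le_of_not_ge hω
        refine le_trans hle ?_
        rw [setLIntegral_const]
        calc δ / 2 * M * P Aᶜ ≤ δ / 2 * M * 1 := by gcongr; exact prob_le_one
          _ = δ / 2 * M := mul_one _
      have h1 : δ * M ≤ M * P A + δ / 2 * M := by
        calc δ * M = ∫⁻ ω, Z ω ∂P := hEZ.symm
          _ = (∫⁻ ω in A, Z ω ∂P) + ∫⁻ ω in Aᶜ, Z ω ∂P := (lintegral_add_compl _ hA).symm
          _ ≤ M * P A + δ / 2 * M := add_le_add hA1 hA2
      have h2 : δ * M - δ / 2 * M ≤ M * P A :=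
        tsub_le_iff_right.2 h1
      have h3 : δ / 2 * M ≤ M * P A := by
        have : δ * M - δ / 2 * M = δ / 2 * M := by
          have := ENNReal.sub_half (a := δ * M) (mul_ne_top hδtop hMne)
          rwa [ENNReal.mul_div_right_comm] at this
        rwa [this] at h2
      rw [mul_comm M (P A)] at h3
      exact (ENNReal.mul_le_mul_iff_left hM0 hMne).1 h3
    -- transfer to G
    refine le_trans hPA (measure_mono ?_)
    intro ω hω
    have hcZ : ENNReal.ofReal c * Z ω ≤ G ω := by
      have : ENNReal.ofReal c * Z ω = ∫⁻ x, ENNReal.ofReal c * F (x, ω) := by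
        rw [hZdef]
        exact (lintegral_const_mul _ (hF.comp measurable_prodMk_right)).symm
      rw [this]
      refine lintegral_mono fun x => ?_
      by_cases hxω : (x, ω) ∈ S
      · have hind : S.indicator (1 : ℝ × Ω → ℝ≥0∞) (x, ω) = 1 := by
          simp [Set.indicator_of_mem hxω]
        have hcX : c ≤ X x ω := hxω
        calc ENNReal.ofReal c * F (x, ω) = ENNReal.ofReal c * g k x := by
              rw [hFdef]; simp only [hind, mul_one]
          _ ≤ ENNReal.ofReal (X x ω) * ENNReal.ofReal (f x) :=
              mul_le_mul' (ofReal_le_ofReal hcX) (hgle k x)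
          _ = ENNReal.ofReal (f x * X x ω) := by
              rw [mul_comm, ← ENNReal.ofReal_mul (hf0 x)]
      · have hind : S.indicator (1 : ℝ × Ω → ℝ≥0∞) (x, ω) = 0 :=
          Set.indicator_of_notMem hxω _
        simp [hFdef, hind]
    calc ENNReal.ofReal c * (δ / 2 * M) ≤ ENNReal.ofReal c * Z ω := by
          gcongr
          exact hω
      _ ≤ G ω := hcZ
  -- conclude
  have hGinf_meas : MeasurableSet {ω | G ω = ∞} := hGmeas (measurableSet_singleton ∞)
  have hGinf0 : P {ω | G ω = ∞} = 0 := by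
    have hcompl : {ω | G ω = ∞} = {ω | G ω < ∞}ᶜ := by
      ext ω; simp [lt_top_iff_ne_top]
    have hmeas' : MeasurableSet {ω | G ω < ∞} := hGmeas measurableSet_Iio
    rw [hcompl, measure_compl hmeas' (measure_ne_top _ _), h]
    simp
  have hlb : δ / 2 ≤ P {ω | G ω = ∞} := by
    have hinter : {ω | G ω = ∞} = ⋂ n : ℕ, {ω | (n : ℝ≥0∞) ≤ G ω} := by
      ext ω
      simp only [Set.mem_setOf_eq, Set.mem_iInter]
      constructor
      · intro hω n; rw [hω]; exact le_top
      · intro hω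
        by_contra hne
        obtain ⟨n, hn⟩ := ENNReal.exists_nat_gt hne
        exact absurd (hω n) (not_le.2 hn)
    rw [hinter, Antitone.measure_iInter]
    · refine le_iInf fun n => ?_
      -- choose k with large enough truncated integral
      set e : ℝ≥0∞ := ENNReal.ofReal c * (δ / 2) with hedef
      have he0 : e ≠ 0 := by
        simp only [hedef, mul_ne_zero_iff]
        constructor
        · simpa [ENNReal.ofReal_eq_zero, not_le] using hc
        · simp [ENNReal.div_eq_zero_iff, hδ]
      have hetop : e ≠ ∞ := mul_ne_top ofReal_ne_top (by simp [ENNReal.div_eq_top, hδtop])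
      obtain ⟨k, hk⟩ : ∃ k : ℕ, (n : ℝ≥0∞) / e < ∫⁻ x, g k x := by
        have := (iSup_eq_top (f := fun k => ∫⁻ x, g k x)).1 hMsup ((n : ℝ≥0∞) / e)
          (ENNReal.div_lt_top (by simp) he0)
        exact this
      have hne : (n : ℝ≥0∞) ≤ e * ∫⁻ x, g k x := by
        rw [mul_comm]
        exact ((ENNReal.div_le_iff he0 hetop).1 hk.le)
      refine le_trans (key k) (measure_mono ?_)
      intro ω hω
      refine le_trans hne ?_
      calc e * ∫⁻ x, g k x = ENNReal.ofReal c * (δ / 2 * ∫⁻ x, g k x) := by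
            rw [hedef, mul_assoc]
        _ ≤ G ω := hω
    · intro i j hij ω hω
      simp only [Set.mem_setOf_eq] at hω ⊢
      exact le_trans (Nat.cast_le.2 hij) hω
    · exact fun n => (hGmeas measurableSet_Ici).nullMeasurableSet
    · exact ⟨0, measure_ne_top _ _⟩
  rw [hGinf0] at hlb
  have : δ / 2 ≠ 0 := by simp [ENNReal.div_eq_zero_iff, hδ]
  exact this (le_antisymm hlb zero_le)
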